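/- Let k ≥ 3 and r = 2k−1. Let U = ℝ^r with standard basis e₁,…,e_r, and define endomorphisms X, H, Y of U by: X e_i = e_{i+1} for i < r and X e_r = 0; H e_i = (r+1−2i) e_i; Y e_i = (i−1)(r+1−i) e_{i−1} for i ≥ 2 and Y e₁ = 0. Define a symmetric bilinear form B on U by B(e_i, e_j) = 0 if i+j ≠ r+1 and B(e_i, e_{r+1−i}) = (−1)^i. Let V = U ⊗ ℝ², let ε be the standard symplectic form on ℝ² (ε(ε₁,ε₂) = 1 for the standard basis ε₁,ε₂), and let σ be the skew-symmetric form on V given by σ(u⊗w, u'⊗w') = B(u,u')·ε(w,w'). Let 𝔞 ⊆ End(V) be the subspace spanned by the operators A ⊗ id_{ℝ²} for A ∈ span{X,H,Y} together with the operators id_U ⊗ M for M ∈ End(ℝ²). Then the modified first prolongation of 𝔞 with respect to σ is trivial: if a linear map φ : V → 𝔞 and a vector v ∈ V satisfy φ(a)b − φ(b)a = σ(a,b)·v for all a,b ∈ V, then φ = 0 and v = 0. (This is the symbol computation for rank 3 distributions with rectangular Young diagram of type (k,0).) -/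

import Mathlib

open scoped TensorProduct

noncomputable section

/-- The irreducible `sl(2)`-module `U = ℝ^r` with `r = 2k − 1`, standard basis `e₁, …, e_r`
(zero-based in Lean). -/
abbrev Umod (k : ℕ) := Fin (2 * k - 1) → ℝ

/-- `X e_i = e_{i+1}` for `i < r` and `X e_r = 0`. -/
def Xop (k : ℕ) : Umod k →ₗ[ℝ] Umod k :=
  Matrix.toLin'
    (Matrix.of fun b a : Fin (2 * k - 1) => if (b : ℕ) = (a : ℕ) + 1 then (1 : ℝ) else 0)

/-- `H e_i = (r + 1 − 2i) e_i`, i.e. (zero-based `a = i − 1`, `r = 2k − 1`)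
the eigenvalue is `2k − 2a − 2`. -/
def Hop (k : ℕ) : Umod k →ₗ[ℝ] Umod k :=
  Matrix.toLin'
    (Matrix.diagonal fun a : Fin (2 * k - 1) => (2 * (k : ℝ)) - 2 * ((a : ℕ) : ℝ) - 2)

/-- `Y e_i = (i − 1)(r + 1 − i) e_{i−1}` for `i ≥ 2` and `Y e₁ = 0`; zero-based the
coefficient on `e_a` (`a = i − 1`) is `a · (2k − 1 − a)`. -/
def Yop (k : ℕ) : Umod k →ₗ[ℝ] Umod k :=
  Matrix.toLin'
    (Matrix.of fun b a : Fin (2 * k - 1) =>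
      if (a : ℕ) = (b : ℕ) + 1 then ((a : ℕ) : ℝ) * ((2 * k - 1 - (a : ℕ) : ℕ) : ℝ) else 0)

/-- The symmetric bilinear form `B` on `U` with `B(e_i, e_j) = 0` for `i + j ≠ r + 1` and
`B(e_i, e_{r+1−i}) = (−1)^i` (1-based indices; `Fin.rev` realizes `a ↦ r − 1 − a`). -/
def Bform (k : ℕ) : Umod k →ₗ[ℝ] Umod k →ₗ[ℝ] ℝ :=
  ∑ a : Fin (2 * k - 1), ((-1 : ℝ) ^ ((a : ℕ) + 1)) •
    ((LinearMap.proj a : Umod k →ₗ[ℝ] ℝ).smulRight (LinearMap.proj a.rev : Umod k →ₗ[ℝ] ℝ))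

/-- The standard symplectic form `ε` on `ℝ²`: `ε(ε₁, ε₂) = 1`. -/
def epsForm : (Fin 2 → ℝ) →ₗ[ℝ] (Fin 2 → ℝ) →ₗ[ℝ] ℝ :=
  (LinearMap.proj (0 : Fin 2) : (Fin 2 → ℝ) →ₗ[ℝ] ℝ).smulRight
      (LinearMap.proj (1 : Fin 2) : (Fin 2 → ℝ) →ₗ[ℝ] ℝ)
    - (LinearMap.proj (1 : Fin 2) : (Fin 2 → ℝ) →ₗ[ℝ] ℝ).smulRight
      (LinearMap.proj (0 : Fin 2) : (Fin 2 → ℝ) →ₗ[ℝ] ℝ)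

/-- `V = U ⊗ ℝ²`. -/
abbrev Vmod (k : ℕ) := Umod k ⊗[ℝ] (Fin 2 → ℝ)

/-- The skew-symmetric form `σ = B ⊗ ε` on `V`:
`σ(u ⊗ w, u' ⊗ w') = B(u, u') · ε(w, w')`. -/
def sigmaForm (k : ℕ) : Vmod k →ₗ[ℝ] Vmod k →ₗ[ℝ] ℝ :=
  LinearMap.BilinForm.tmul (Bform k) epsForm

/-- The subalgebra `𝔞 ⊆ End(V)` spanned by the operators `A ⊗ id` for
`A ∈ span{X, H, Y}` together with the operators `id ⊗ M` for `M ∈ End(ℝ²)`. -/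
def aAlg (k : ℕ) : Submodule ℝ (Vmod k →ₗ[ℝ] Vmod k) :=
  Submodule.span ℝ
    (((fun A : Umod k →ₗ[ℝ] Umod k => LinearMap.rTensor (Fin 2 → ℝ) A) ''
        (Submodule.span ℝ ({Xop k, Hop k, Yop k} : Set (Umod k →ₗ[ℝ] Umod k)) : Set _))
      ∪ Set.range (fun M : (Fin 2 → ℝ) →ₗ[ℝ] (Fin 2 → ℝ) => LinearMap.lTensor (Umod k) M))

/-! ### Auxiliary machinery -/

/-- The coordinate functional on `V = U ⊗ ℝ²`. -/
def Fc (k : ℕ) (c : Fin (2*k-1)) (u : Fin 2) : Vmod k →ₗ[ℝ] ℝ :=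
  TensorProduct.lift ((LinearMap.proj c : Umod k →ₗ[ℝ] ℝ).smulRight
    (LinearMap.proj u : (Fin 2 → ℝ) →ₗ[ℝ] ℝ))

lemma Fc_tmul (k : ℕ) (c : Fin (2*k-1)) (u : Fin 2) (x : Umod k) (y : Fin 2 → ℝ) :
    Fc k c u (x ⊗ₜ y) = x c * y u := by
  simp [Fc, smul_eq_mul]

lemma Xval (k : ℕ) (b c : Fin (2*k-1)) :
    Xop k (Pi.single b 1) c = if (c : ℕ) = (b : ℕ) + 1 then 1 else 0 := by
  simp [Xop, Matrix.toLin'_apply, Matrix.mulVec_single]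

lemma Hval (k : ℕ) (b c : Fin (2*k-1)) :
    Hop k (Pi.single b 1) c
      = if (c : ℕ) = (b : ℕ) then (2 * (k:ℝ) - 2 * ((b:ℕ):ℝ) - 2) else 0 := by
  simp only [Hop, Matrix.toLin'_apply, Matrix.mulVec_single, mul_one, Matrix.diagonal_apply]
  by_cases h : c = b
  · subst h; simp
  · have h' : ¬((c:ℕ) = (b:ℕ)) := by simpa [Fin.ext_iff] using h
    simp [h, h', Matrix.diagonal_apply]

lemma Yval (k : ℕ) (b c : Fin (2*k-1)) :
    Yop k (Pi.single b 1) c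
      = if (b : ℕ) = (c : ℕ) + 1 then ((b:ℕ):ℝ) * ((2*k-1-(b:ℕ) : ℕ) : ℝ) else 0 := by
  simp [Yop, Matrix.toLin'_apply, Matrix.mulVec_single]

lemma Bval (k : ℕ) (a b : Fin (2*k-1)) :
    Bform k (Pi.single a 1) (Pi.single b 1)
      = if (a : ℕ) + (b : ℕ) = 2*k-2 then (-1:ℝ)^((a:ℕ)+1) else 0 := by
  simp only [Bform, LinearMap.sum_apply, LinearMap.smul_apply, LinearMap.smulRight_apply,
    LinearMap.proj_apply, smul_eq_mul, Pi.single_apply]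
  rw [Finset.sum_eq_single a]
  · have hrev : ((a.rev : ℕ) = (b:ℕ)) ↔ (a:ℕ) + (b:ℕ) = 2*k-2 := by
      have := a.isLt; have := b.isLt
      rw [Fin.val_rev]; omega
    by_cases h : (a:ℕ) + (b:ℕ) = 2*k-2
    · rw [if_pos h, if_pos rfl, if_pos (Fin.ext (hrev.2 h))]
      ring
    · rw [if_neg h, if_neg (fun hc : a.rev = b => h (hrev.1 (congrArg Fin.val hc)))]
      ring
  · intro a' _ ha'
    rw [if_neg ha']
    ring
  · intro h; exact absurd (Finset.mem_univ a) h

lemma epsval (s t : Fin 2) :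
    epsForm (Pi.single s 1) (Pi.single t 1)
      = (if (s:ℕ) = 0 ∧ (t:ℕ) = 1 then 1 else if (s:ℕ) = 1 ∧ (t:ℕ) = 0 then -1 else 0) := by
  fin_cases s <;> fin_cases t <;> simp [epsForm]

lemma sigval (k : ℕ) (a b : Fin (2*k-1)) (s t : Fin 2) :
    sigmaForm k (Pi.single a 1 ⊗ₜ Pi.single s 1) (Pi.single b 1 ⊗ₜ Pi.single t 1)
      = epsForm (Pi.single s 1) (Pi.single t 1) * Bform k (Pi.single a 1) (Pi.single b 1) := by
  simp [sigmaForm, smul_eq_mul]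

lemma mem_span_triple {M : Type*} [AddCommGroup M] [Module ℝ M] {u x y z : M}
    (h : u ∈ Submodule.span ℝ ({x, y, z} : Set M)) :
    ∃ a b c : ℝ, u = a • x + b • y + c • z := by
  rw [Submodule.mem_span_insert] at h
  obtain ⟨a, w, hw, rfl⟩ := h
  rw [Submodule.mem_span_pair] at hw
  obtain ⟨b, c, rfl⟩ := hw
  exact ⟨a, b, c, by abel⟩

lemma aAlg_mem {k : ℕ} {T : Vmod k →ₗ[ℝ] Vmod k} (hT : T ∈ aAlg k) :
    ∃ (x h y : ℝ) (M : (Fin 2 → ℝ) →ₗ[ℝ] (Fin 2 → ℝ)),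
      T = LinearMap.rTensor (Fin 2 → ℝ) (x • Xop k + h • Hop k + y • Yop k)
        + LinearMap.lTensor (Umod k) M := by
  have hle : aAlg k ≤
      Submodule.map (LinearMap.rTensorHom (Fin 2 → ℝ))
        (Submodule.span ℝ ({Xop k, Hop k, Yop k} : Set (Umod k →ₗ[ℝ] Umod k)))
      ⊔ LinearMap.range (LinearMap.lTensorHom (M := Umod k) (R := ℝ)
          (N := Fin 2 → ℝ) (P := Fin 2 → ℝ)) := by
    rw [aAlg]
    apply Submodule.span_le.2
    rintro T (⟨A, hA, rfl⟩ | ⟨M, rfl⟩)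
    · exact Submodule.mem_sup_left ⟨A, hA, rfl⟩
    · exact Submodule.mem_sup_right ⟨M, rfl⟩
  obtain ⟨T₁, hT₁, T₂, hT₂, rfl⟩ := Submodule.mem_sup.1 (hle hT)
  obtain ⟨A, hA, rfl⟩ := hT₁
  obtain ⟨M, rfl⟩ := hT₂
  obtain ⟨x, h, y, rfl⟩ := mem_span_triple hA
  exact ⟨x, h, y, M, rfl⟩

/-- (Rectangular symbol computation.)  For `k ≥ 3` the modified first
prolongation of `𝔞 = sl(2) ⊗ id + id ⊗ gl(2) ⊆ End(U ⊗ ℝ²)` with respect to `σ = B ⊗ ε`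
is trivial: any linear `φ : V → 𝔞` and `v ∈ V` with `φ(a)b − φ(b)a = σ(a,b) • v` for all
`a, b ∈ V` satisfy `φ = 0` and `v = 0`. -/
theorem stmt_14 (k : ℕ) (hk : 3 ≤ k)
    (φ : Vmod k →ₗ[ℝ] (Vmod k →ₗ[ℝ] Vmod k)) (hφ : ∀ z : Vmod k, φ z ∈ aAlg k)
    (v : Vmod k) (hv : ∀ a b : Vmod k, φ a b - φ b a = sigmaForm k a b • v) :
    φ = 0 ∧ v = 0 := by
  have hk5 : 5 ≤ 2 * k - 1 := by omega
  choose Xc Hc Yc Mc hrep using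
    fun (a : Fin (2*k-1)) (s : Fin 2) => aAlg_mem (hφ (Pi.single a 1 ⊗ₜ Pi.single s 1))
  -- The master scalar equation
  have master : ∀ (a b c : Fin (2*k-1)) (s t u : Fin 2),
      (Xc a s * (if (c:ℕ) = (b:ℕ)+1 then 1 else 0)
        + Hc a s * (if (c:ℕ) = (b:ℕ) then (2*(k:ℝ) - 2*((b:ℕ):ℝ) - 2) else 0)
        + Yc a s * (if (b:ℕ) = (c:ℕ)+1 then ((b:ℕ):ℝ) * ((2*k-1-(b:ℕ):ℕ):ℝ) else 0))
        * (if (u:ℕ) = (t:ℕ) then 1 else 0)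
      + (if (c:ℕ) = (b:ℕ) then 1 else 0) * (Mc a s (Pi.single t 1) u)
      - (Xc b t * (if (c:ℕ) = (a:ℕ)+1 then 1 else 0)
        + Hc b t * (if (c:ℕ) = (a:ℕ) then (2*(k:ℝ) - 2*((a:ℕ):ℝ) - 2) else 0)
        + Yc b t * (if (a:ℕ) = (c:ℕ)+1 then ((a:ℕ):ℝ) * ((2*k-1-(a:ℕ):ℕ):ℝ) else 0))
        * (if (u:ℕ) = (s:ℕ) then 1 else 0)
      - (if (c:ℕ) = (a:ℕ) then 1 else 0) * (Mc b t (Pi.single s 1) u)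
      = (if (s:ℕ) = 0 ∧ (t:ℕ) = 1 then 1 else if (s:ℕ) = 1 ∧ (t:ℕ) = 0 then -1 else 0)
        * (if (a:ℕ)+(b:ℕ) = 2*k-2 then (-1:ℝ)^((a:ℕ)+1) else 0) * Fc k c u v := by
    intro a b c s t u
    have e := congrArg (Fc k c u)
      (hv (Pi.single a 1 ⊗ₜ Pi.single s 1) (Pi.single b 1 ⊗ₜ Pi.single t 1))
    rw [map_sub, map_smul, hrep a s, hrep b t, sigval] at e
    simp only [LinearMap.add_apply, LinearMap.rTensor_tmul, LinearMap.lTensor_tmul,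
      map_add, Fc_tmul, LinearMap.smul_apply, Pi.add_apply, Pi.smul_apply,
      smul_eq_mul, Bval, epsval, Xval, Hval, Yval, Pi.single_apply, Fin.ext_iff] at e
    linear_combination e

  -- Step 1: X coefficients vanish
  have hX : ∀ (a : Fin (2*k-1)) (s : Fin 2), Xc a s = 0 := by
    have key : ∀ (a : Fin (2*k-1)) (s : Fin 2) (bn : ℕ), bn + 1 < 2*k-1 → bn ≠ (a:ℕ) →
        bn + 1 ≠ (a:ℕ) → (a:ℕ) ≠ bn + 2 → Xc a s = 0 := by
      intro a s bn h1 h2 h3 h4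
      obtain ⟨b, hbv⟩ : ∃ b : Fin (2*k-1), (b:ℕ) = bn := ⟨⟨bn, by omega⟩, rfl⟩
      obtain ⟨c, hcv⟩ : ∃ c : Fin (2*k-1), (c:ℕ) = bn + 1 := ⟨⟨bn+1, by omega⟩, rfl⟩
      have e := master a b c s s s
      have d1 : ((c:ℕ) = (b:ℕ)+1) := by omega
      have d2 : ¬((c:ℕ) = (b:ℕ)) := by omega
      have d3 : ¬((b:ℕ) = (c:ℕ)+1) := by omega
      have d4 : ¬((c:ℕ) = (a:ℕ)+1) := by omega
      have d5 : ¬((c:ℕ) = (a:ℕ)) := by omega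
      have d6 : ¬((a:ℕ) = (c:ℕ)+1) := by omega
      have d7 : ¬((s:ℕ) = 0 ∧ (s:ℕ) = 1) := by omega
      have d8 : ¬((s:ℕ) = 1 ∧ (s:ℕ) = 0) := by omega
      rw [if_pos d1] at e
      simp only [d2, d3, d4, d5, d6, d7, d8, eq_self_iff_true, if_true, if_false] at e
      linear_combination e
    intro a s
    by_cases ha : 3 ≤ (a:ℕ)
    · exact key a s 0 (by omega) (by omega) (by omega) (by omega)
    · exact key a s 3 (by omega) (by omega) (by omega) (by omega)
  -- Step 2: Y coefficients vanish
  have hY : ∀ (a : Fin (2*k-1)) (s : Fin 2), Yc a s = 0 := by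
    have key : ∀ (a : Fin (2*k-1)) (s : Fin 2) (bn : ℕ), 1 ≤ bn → bn < 2*k-1 →
        bn ≠ (a:ℕ) → bn ≠ (a:ℕ) + 1 → bn ≠ (a:ℕ) + 2 → Yc a s = 0 := by
      intro a s bn h0 h1 h2 h3 h4
      obtain ⟨b, hbv⟩ : ∃ b : Fin (2*k-1), (b:ℕ) = bn := ⟨⟨bn, by omega⟩, rfl⟩
      obtain ⟨c, hcv⟩ : ∃ c : Fin (2*k-1), (c:ℕ) = bn - 1 := ⟨⟨bn-1, by omega⟩, rfl⟩
      have e := master a b c s s s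
      have d1 : ¬((c:ℕ) = (b:ℕ)+1) := by omega
      have d2 : ¬((c:ℕ) = (b:ℕ)) := by omega
      have d3 : ((b:ℕ) = (c:ℕ)+1) := by omega
      have d4 : ¬((c:ℕ) = (a:ℕ)+1) := by omega
      have d5 : ¬((c:ℕ) = (a:ℕ)) := by omega
      have d6 : ¬((a:ℕ) = (c:ℕ)+1) := by omega
      have d7 : ¬((s:ℕ) = 0 ∧ (s:ℕ) = 1) := by omega
      have d8 : ¬((s:ℕ) = 1 ∧ (s:ℕ) = 0) := by omega
      rw [if_pos d3] at e
      simp only [d1, d2, d4, d5, d6, d7, d8, eq_self_iff_true, if_true, if_false] at e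
      have e2 : Yc a s * (((b:ℕ):ℝ) * ((2*k-1-(b:ℕ):ℕ):ℝ)) = 0 := by linear_combination e
      have hq : (((b:ℕ):ℝ) * ((2*k-1-(b:ℕ):ℕ):ℝ)) ≠ 0 := by
        apply mul_ne_zero <;> · rw [Nat.cast_ne_zero]; omega
      exact (mul_eq_zero.1 e2).resolve_right hq
    intro a s
    by_cases ha : (a:ℕ) ≤ 1
    · exact key a s 4 (by omega) (by omega) (by omega) (by omega) (by omega)
    · exact key a s 1 (by omega) (by omega) (by omega) (by omega) (by omega)
  -- Step 3: H coefficients and diagonal M entries vanish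
  have keyH : ∀ (a : Fin (2*k-1)) (s : Fin 2) (bn : ℕ), bn < 2*k-1 →
      bn ≠ (a:ℕ) → bn ≠ (a:ℕ) + 1 → (a:ℕ) ≠ bn + 1 →
      Hc a s * (2*(k:ℝ) - 2*(bn:ℝ) - 2) + Mc a s (Pi.single s 1) s = 0 := by
    intro a s bn h1 h2 h3 h4
    obtain ⟨b, hbv⟩ : ∃ b : Fin (2*k-1), (b:ℕ) = bn := ⟨⟨bn, by omega⟩, rfl⟩
    have e := master a b b s s s
    have d1 : ¬((b:ℕ) = (b:ℕ)+1) := by omega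
    have d4 : ¬((b:ℕ) = (a:ℕ)+1) := by omega
    have d5 : ¬((b:ℕ) = (a:ℕ)) := by omega
    have d6 : ¬((a:ℕ) = (b:ℕ)+1) := by omega
    have d7 : ¬((s:ℕ) = 0 ∧ (s:ℕ) = 1) := by omega
    have d8 : ¬((s:ℕ) = 1 ∧ (s:ℕ) = 0) := by omega
    simp only [d1, d4, d5, d6, d7, d8, eq_self_iff_true, if_true, if_false] at e
    rw [show ((b:ℕ):ℝ) = (bn:ℝ) from by rw [hbv]] at e
    linear_combination e
  have hH : ∀ (a : Fin (2*k-1)) (s : Fin 2), Hc a s = 0 := by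
    intro a s
    by_cases ha1 : (a:ℕ) ≤ 1
    · have e1 := keyH a s 3 (by omega) (by omega) (by omega) (by omega)
      have e2 := keyH a s 4 (by omega) (by omega) (by omega) (by omega)
      push_cast at e1 e2
      linear_combination (e1 - e2) / 2
    · by_cases ha2 : (a:ℕ) = 2
      · have e1 := keyH a s 0 (by omega) (by omega) (by omega) (by omega)
        have e2 := keyH a s 4 (by omega) (by omega) (by omega) (by omega)
        push_cast at e1 e2
        linear_combination (e1 - e2) / 8
      · have e1 := keyH a s 0 (by omega) (by omega) (by omega) (by omega)
        have e2 := keyH a s 1 (by omega) (by omega) (by omega) (by omega)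
        push_cast at e1 e2
        linear_combination (e1 - e2) / 2
  -- Step 4: the coordinates of v vanish
  have hvc : ∀ (c : Fin (2*k-1)) (u : Fin 2), Fc k c u v = 0 := by
    have key : ∀ (c : Fin (2*k-1)) (u : Fin 2) (an : ℕ), an ≤ 1 → an ≠ (c:ℕ) →
        2*k-2-an ≠ (c:ℕ) → Fc k c u v = 0 := by
      intro c u an h1 h2 h3
      obtain ⟨a, hav⟩ : ∃ a : Fin (2*k-1), (a:ℕ) = an := ⟨⟨an, by omega⟩, rfl⟩
      obtain ⟨b, hbv⟩ : ∃ b : Fin (2*k-1), (b:ℕ) = 2*k-2-an := ⟨⟨2*k-2-an, by omega⟩, rfl⟩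
      have e := master a b c 0 1 u
      have d1 : ¬((c:ℕ) = (b:ℕ)) := by omega
      have d2 : ¬((c:ℕ) = (a:ℕ)) := by omega
      have d3 : ((a:ℕ) + (b:ℕ) = 2*k-2) := by omega
      have d4 : (((0:Fin 2):ℕ) = 0 ∧ ((1:Fin 2):ℕ) = 1) := by decide
      rw [if_pos d3, if_pos d4] at e
      simp only [hX, hY, hH, d1, d2, eq_self_iff_true, if_true, if_false, zero_mul,
        mul_zero, add_zero, zero_add, zero_sub, sub_zero, neg_zero, one_mul] at e
      rw [hav] at e
      interval_cases an <;>
        first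
          | linear_combination e
          | linear_combination -e
    intro c u
    by_cases hc : (c:ℕ) = 0 ∨ (c:ℕ) = 2*k-2
    · exact key c u 1 (by omega) (by omega) (by omega)
    · exact key c u 0 (by omega) (by omega) (by omega)
  -- Step 5: all M entries vanish
  have hM : ∀ (a : Fin (2*k-1)) (s t : Fin 2) (u : Fin 2), Mc a s (Pi.single t 1) u = 0 := by
    intro a s t u
    obtain ⟨b, hbv⟩ : ∃ b : Fin (2*k-1), (b:ℕ) = (if (a:ℕ) = 0 then 1 else 0) :=
      ⟨⟨if (a:ℕ) = 0 then 1 else 0, by split <;> omega⟩, rfl⟩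
    have hba : (b:ℕ) ≠ (a:ℕ) := by split at hbv <;> omega
    have e := master a b b s t u
    have d1 : ¬((b:ℕ) = (b:ℕ)+1) := by omega
    simp only [hX, hY, hH, hvc, d1, hba, eq_self_iff_true, if_true, if_false, zero_mul,
      mul_zero, add_zero, zero_add, zero_sub, sub_zero, neg_zero, one_mul] at e
    linear_combination e
  -- Assemble: Mc a s = 0 and φ = 0
  have hM0 : ∀ (a : Fin (2*k-1)) (s : Fin 2), Mc a s = 0 := by
    intro a s
    apply (Pi.basisFun ℝ (Fin 2)).ext
    intro t
    rw [Pi.basisFun_apply]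
    funext u
    simpa using hM a s t u
  have hφ0 : ∀ (a : Fin (2*k-1)) (s : Fin 2), φ (Pi.single a 1 ⊗ₜ Pi.single s 1) = 0 := by
    intro a s
    rw [hrep a s, hX a s, hY a s, hH a s, hM0 a s]
    simp
  set bV := (Pi.basisFun ℝ (Fin (2*k-1))).tensorProduct (Pi.basisFun ℝ (Fin 2)) with hbV
  constructor
  · apply bV.ext
    rintro ⟨a, s⟩
    rw [hbV, Module.Basis.tensorProduct_apply, Pi.basisFun_apply, Pi.basisFun_apply,
      LinearMap.zero_apply]
    exact hφ0 a s
  · -- v = 0 from vanishing coordinates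
    have h1 : ∀ p : Fin (2*k-1) × Fin 2, ∀ (c : Fin (2*k-1)) (u : Fin 2),
        Fc k c u (bV p) = if p = (c, u) then 1 else 0 := by
      rintro ⟨a, s⟩ c u
      rw [hbV, Module.Basis.tensorProduct_apply', Pi.basisFun_apply, Pi.basisFun_apply, Fc_tmul]
      by_cases h1 : a = c <;> by_cases h2 : s = u <;>
        simp [h1, h2, Pi.single_apply, Prod.ext_iff]
    have hrepr : ∀ (c : Fin (2*k-1)) (u : Fin 2), bV.repr v (c, u) = 0 := by
      intro c u
      have hs := bV.sum_repr v
      have e := congrArg (Fc k c u) hs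
      rw [map_sum] at e
      simp_rw [map_smul, h1, smul_eq_mul, mul_ite, mul_one, mul_zero] at e
      rw [Finset.sum_ite_eq' Finset.univ ((c, u) : Fin (2*k-1) × Fin 2)] at e
      simp only [Finset.mem_univ, if_true] at e
      rw [e, hvc c u]
    have : bV.repr v = 0 := by
      ext p
      obtain ⟨c, u⟩ := p
      simpa using hrepr c u
    calc v = bV.repr.symm (bV.repr v) := (bV.repr.symm_apply_apply v).symm
      _ = 0 := by rw [this]; simp


end
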